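/- Let s = n·ln(#𝒟)/ln q. If either #𝒟_M < (#𝒟)^M for some M ≥ 1, or 𝒟_∞ is not uniformly discrete, then ℰ^+_{w,s}(μ) = ∞. -/

import Mathlib

open MeasureTheory Set ENNReal NNReal

noncomputable section

/-- Points of `ℝⁿ` with the Euclidean norm. -/
abbrev Pt (n : ℕ) := EuclideanSpace ℝ (Fin n)

/-- The action of an `n × n` real matrix on Euclidean space. -/
def mapp {n : ℕ} (A : Matrix (Fin n) (Fin n) ℝ) (x : Pt n) : Pt n :=
  Matrix.toEuclideanLin A x

/-- A real matrix is expanding if all of its (complex) eigenvalues have modulus `> 1`. -/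
def IsExpandingMatrix {n : ℕ} (A : Matrix (Fin n) (Fin n) ℝ) : Prop :=
  ∀ μ ∈ spectrum ℂ (A.map (fun a => (a : ℂ))), 1 < ‖μ‖

/-- The diameter of a set with respect to the pseudo norm `w`. -/
def pdiam {n : ℕ} (w : Pt n → ℝ) (E : Set (Pt n)) : ℝ≥0∞ :=
  ⨆ (x ∈ E) (y ∈ E), ENNReal.ofReal (w (x - y))

/-- The `δ`-approximation of the `s`-dimensional pseudo Hausdorff measure. -/
def preHw {n : ℕ} (w : Pt n → ℝ) (s δ : ℝ) (E : Set (Pt n)) : ℝ≥0∞ :=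
  ⨅ (U : ℕ → Set (Pt n)) (_ : E ⊆ ⋃ i, U i)
    (_ : ∀ i, pdiam w (U i) ≤ ENNReal.ofReal δ), ∑' i, pdiam w (U i) ^ s

/-- The `s`-dimensional pseudo Hausdorff measure w.r.t. the pseudo norm `w`. -/
def Hw {n : ℕ} (w : Pt n → ℝ) (s : ℝ) (E : Set (Pt n)) : ℝ≥0∞ :=
  ⨆ (δ : ℝ) (_ : 0 < δ), preHw w s δ E

/-- Carathéodory measurability with respect to the outer measure `Hw w s`. -/
def HwMeasurable {n : ℕ} (w : Pt n → ℝ) (s : ℝ) (E : Set (Pt n)) : Prop :=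
  ∀ T : Set (Pt n), Hw w s T = Hw w s (T ∩ E) + Hw w s (T \ E)

/-- A pseudo norm associated with the expanding matrix `A`. -/
structure IsPseudoNorm {n : ℕ} (A : Matrix (Fin n) (Fin n) ℝ) (w : Pt n → ℝ) : Prop where
  continuous : Continuous w
  nonneg : ∀ x, 0 ≤ w x
  neg : ∀ x, w (-x) = w x
  eq_zero_iff : ∀ x, w x = 0 ↔ x = 0
  scaling : ∀ x, w (mapp A x) = |A.det| ^ ((1 : ℝ) / n) * w x
  quasi_triangle : ∃ β > (0 : ℝ), ∀ x y, w (x + y) ≤ β * max (w x) (w y)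
  comparable : ∃ C > (0 : ℝ), ∃ α₁ > (0 : ℝ), ∃ α₂ > (0 : ℝ),
    (∀ x : Pt n, 1 < ‖x‖ → C⁻¹ * ‖x‖ ^ α₁ ≤ w x ∧ w x ≤ C * ‖x‖ ^ α₂) ∧
    (∀ x : Pt n, ‖x‖ ≤ 1 → C⁻¹ * ‖x‖ ^ α₂ ≤ w x ∧ w x ≤ C * ‖x‖ ^ α₁)

/-- The map `f_d(x) = A⁻¹(x + d)` of the self-affine IFS. -/
def fIFS {n : ℕ} (A : Matrix (Fin n) (Fin n) ℝ) (d : Pt n) (x : Pt n) : Pt n :=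
  mapp A⁻¹ (x + d)

/-- The open set condition for the IFS `{f_d}_{d ∈ D}`. -/
def OSC {n : ℕ} (A : Matrix (Fin n) (Fin n) ℝ) (D : Finset (Pt n)) : Prop :=
  ∃ V : Set (Pt n), V.Nonempty ∧ IsOpen V ∧ Bornology.IsBounded V ∧
    (⋃ d ∈ D, fIFS A d '' V) ⊆ V ∧
    ∀ d ∈ D, ∀ d' ∈ D, d ≠ d' → fIFS A d '' V ∩ fIFS A d' '' V = ∅

/-- `K` is the self-affine set (attractor) for the pair `(A, D)`:
a nonempty compact set with `A K = ⋃_{d ∈ D} (K + d)`. -/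
def IsSelfAffineSet {n : ℕ} (A : Matrix (Fin n) (Fin n) ℝ) (D : Finset (Pt n))
    (K : Set (Pt n)) : Prop :=
  K.Nonempty ∧ IsCompact K ∧ mapp A '' K = ⋃ d ∈ D, (fun x => x + d) '' K

/-- The set `𝒟_M` of `M`-fold expansions `Σ_{j<M} A^j d_j`. -/
def DsetM {n : ℕ} (A : Matrix (Fin n) (Fin n) ℝ) (D : Finset (Pt n)) (M : ℕ) :
    Set (Pt n) :=
  {x | ∃ d : Fin M → Pt n, (∀ j, d j ∈ D) ∧ x = ∑ j : Fin M, mapp (A ^ (j : ℕ)) (d j)}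

/-- The set `𝒟_∞ = ⋃_{M ≥ 1} 𝒟_M`. -/
def DsetInf {n : ℕ} (A : Matrix (Fin n) (Fin n) ℝ) (D : Finset (Pt n)) : Set (Pt n) :=
  ⋃ (M : ℕ) (_ : 1 ≤ M), DsetM A D M

/-- A set is uniformly discrete if distinct points are uniformly separated. -/
def UniformlyDiscrete {n : ℕ} (S : Set (Pt n)) : Prop :=
  ∃ δ > (0 : ℝ), ∀ x ∈ S, ∀ y ∈ S, x ≠ y → δ < ‖x - y‖

/-- `σ` is the invariant (self-affine) probability measure of the IFS `{f_d}_{d ∈ D}`. -/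
def IsInvariantMeasure {n : ℕ} (A : Matrix (Fin n) (Fin n) ℝ) (D : Finset (Pt n))
    (σ : Measure (Pt n)) : Prop :=
  IsProbabilityMeasure σ ∧
  ∀ f : Pt n → ℝ, Continuous f → HasCompactSupport f →
    ∫ x, f x ∂σ = ((D.card : ℝ))⁻¹ * ∑ d ∈ D, ∫ x, f (fIFS A d x) ∂σ

/-- The measure `μ_M = Σ_{d_0,…,d_{M−1} ∈ 𝒟} δ_{d_0 + A d_1 + ⋯ + A^{M−1} d_{M−1}}`. -/
def muM {n : ℕ} (A : Matrix (Fin n) (Fin n) ℝ) (D : Finset (Pt n)) (M : ℕ) :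
    Measure (Pt n) :=
  ∑ d ∈ (Finset.univ : Finset (Fin M → {x : Pt n // x ∈ D})),
    Measure.dirac (∑ j : Fin M, mapp (A ^ (j : ℕ)) ((d j : Pt n)))

/-- Convolution of two Borel measures on `ℝⁿ`. -/
def mconv {n : ℕ} (μ ν : Measure (Pt n)) : Measure (Pt n) :=
  Measure.map (fun p : Pt n × Pt n => p.1 + p.2) (μ.prod ν)

/-- The upper `s`-density `ℰ⁺_{w,s}(ν)` of a Borel measure `ν` w.r.t. the pseudo norm `w`. -/
def upperDensity {n : ℕ} (w : Pt n → ℝ) (s : ℝ) (ν : Measure (Pt n)) : ℝ≥0∞ :=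
  ⨅ (r : ℝ) (_ : 0 < r),
    ⨆ (U : Set (Pt n)) (_ : IsCompact U) (_ : Convex ℝ U)
      (_ : ENNReal.ofReal r ≤ pdiam w U), ν U / pdiam w U ^ s

/-- The upper convex `s`-density `D^s_{w,c}(E, x)` of `E` at `x` w.r.t. `w`. -/
def upperConvexDensity {n : ℕ} (w : Pt n → ℝ) (s : ℝ) (E : Set (Pt n)) (x : Pt n) :
    ℝ≥0∞ :=
  ⨅ (r : ℝ) (_ : 0 < r),
    ⨆ (U : Set (Pt n)) (_ : Convex ℝ U) (_ : x ∈ U) (_ : 0 < pdiam w U)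
      (_ : pdiam w U ≤ ENNReal.ofReal r), Hw w s (E ∩ U) / pdiam w U ^ s

/-- The pseudo Hausdorff dimension `dim_H^w E = inf {s ≥ 0 : ℋ^s_w(E) = 0}`. -/
def dimHw {n : ℕ} (w : Pt n → ℝ) (E : Set (Pt n)) : ℝ≥0∞ :=
  ⨅ (t : ℝ≥0) (_ : Hw w (t : ℝ) E = 0), (t : ℝ≥0∞)

/-- `𝒱` is a Vitali class for `E` w.r.t. `w`. -/
def VitaliClass {n : ℕ} (w : Pt n → ℝ) (𝒱 : Set (Set (Pt n))) (E : Set (Pt n)) : Prop :=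
  ∀ x ∈ E, ∀ δ : ℝ, 0 < δ →
    ∃ U ∈ 𝒱, x ∈ U ∧ 0 < pdiam w U ∧ pdiam w U ≤ ENNReal.ofReal δ

/-- The composite map `f_𝐢 = f_{i₁} ∘ ⋯ ∘ f_{i_m}` associated with a word of digits. -/
def fWord {n : ℕ} (A : Matrix (Fin n) (Fin n) ℝ) (i : List (Pt n)) (x : Pt n) : Pt n :=
  i.foldr (fun d y => fIFS A d y) x


section AuxStmt18

variable {n : ℕ}

lemma mapp_zero' (A : Matrix (Fin n) (Fin n) ℝ) : mapp A (0 : Pt n) = 0 := by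
  simp [mapp]

lemma mapp_mul' (A B : Matrix (Fin n) (Fin n) ℝ) (x : Pt n) :
    mapp (A * B) x = mapp A (mapp B x) := by
  simp [mapp, Matrix.toEuclideanLin_apply, Matrix.mulVec_mulVec]

/-- The weighted digit sum `∑ A^j d_j`. -/
def Ssum (A : Matrix (Fin n) (Fin n) ℝ) {N : ℕ} (d : Fin N → Pt n) : Pt n :=
  ∑ j : Fin N, mapp (A ^ (j : ℕ)) (d j)

lemma Ssum_append (A : Matrix (Fin n) (Fin n) ℝ) {N M : ℕ}
    (u : Fin N → Pt n) (v : Fin M → Pt n) :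
    Ssum A (Fin.append u v) = Ssum A u + mapp (A ^ N) (Ssum A v) := by
  unfold Ssum
  rw [Fin.sum_univ_add]
  congr 1
  · exact Finset.sum_congr rfl fun i _ => by rw [Fin.append_left, Fin.coe_castAdd]
  · have hmap : mapp (A ^ N) (∑ j : Fin M, mapp (A ^ (j : ℕ)) (v j)) =
        ∑ j : Fin M, mapp (A ^ N) (mapp (A ^ (j : ℕ)) (v j)) := by
      unfold mapp; exact map_sum _ _ _
    rw [hmap]
    refine Finset.sum_congr rfl fun i _ => ?_
    rw [Fin.append_right]
    have : ((Fin.natAdd N i : Fin (N + M)) : ℕ) = N + (i : ℕ) := rfl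
    rw [this, pow_add, mapp_mul']

lemma le_pdiam' {w : Pt n → ℝ} {E : Set (Pt n)} {x y : Pt n}
    (hx : x ∈ E) (hy : y ∈ E) : ENNReal.ofReal (w (x - y)) ≤ pdiam w E :=
  le_iSup₂_of_le x hx (le_iSup₂_of_le y hy le_rfl)

lemma pdiam_le' {w : Pt n → ℝ} {E : Set (Pt n)} {m : ℝ}
    (h : ∀ x ∈ E, ∀ y ∈ E, w (x - y) ≤ m) : pdiam w E ≤ ENNReal.ofReal m :=
  iSup₂_le fun x hx => iSup₂_le fun y hy => ENNReal.ofReal_le_ofReal (h x hx y hy)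

lemma pdiam_closedBall_le' (w : Pt n → ℝ) (z z' : Pt n) (R : ℝ) :
    pdiam w (Metric.closedBall z R) ≤ pdiam w (Metric.closedBall z' R) := by
  refine iSup₂_le fun x hx => iSup₂_le fun y hy => ?_
  rw [Metric.mem_closedBall, dist_eq_norm] at hx hy
  have hx' : x - z + z' ∈ Metric.closedBall z' R := by
    rw [Metric.mem_closedBall, dist_eq_norm]; simpa using hx
  have hy' : y - z + z' ∈ Metric.closedBall z' R := by
    rw [Metric.mem_closedBall, dist_eq_norm]; simpa using hy
  have hxy : x - y = (x - z + z') - (y - z + z') := by abel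
  rw [hxy]
  exact le_pdiam' hx' hy'

lemma pdiam_closedBall_eq' (w : Pt n → ℝ) (z z' : Pt n) (R : ℝ) :
    pdiam w (Metric.closedBall z R) = pdiam w (Metric.closedBall z' R) :=
  le_antisymm (pdiam_closedBall_le' w z z' R) (pdiam_closedBall_le' w z' z R)

lemma DsetM_mono' (A : Matrix (Fin n) (Fin n) ℝ) (D : Finset (Pt n))
    (hD0 : (0 : Pt n) ∈ D) {M M' : ℕ} (h : M ≤ M') :
    DsetM A D M ⊆ DsetM A D M' := by
  rintro x ⟨d, hd, rfl⟩
  refine ⟨fun j => if h' : (j : ℕ) < M then d ⟨(j : ℕ), h'⟩ else 0, fun j => ?_, ?_⟩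
  · by_cases h' : (j : ℕ) < M
    · simpa [h'] using hd _
    · simpa [h'] using hD0
  have key : ∀ (K : ℕ) (hK : K ≤ M'),
      (∑ j : Fin K, mapp (A ^ (j : ℕ))
        (if h' : (j : ℕ) < M then d ⟨(j : ℕ), h'⟩ else 0)) =
      ∑ j ∈ Finset.range K,
        (if h' : j < M then mapp (A ^ j) (d ⟨j, h'⟩) else 0) := by
    intro K hK
    rw [Fin.sum_univ_eq_sum_range
      (fun j => mapp (A ^ j) (if h' : j < M then d ⟨j, h'⟩ else 0)) K]
    refine Finset.sum_congr rfl fun j _ => ?_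
    by_cases h' : j < M
    · simp [h']
    · simp [h', mapp_zero']
  have lhs : (∑ j : Fin M, mapp (A ^ (j : ℕ)) (d j)) =
      ∑ j : Fin M, (if h' : (j : ℕ) < M then mapp (A ^ (j : ℕ)) (d ⟨(j : ℕ), h'⟩) else 0) :=
    Finset.sum_congr rfl fun j _ => by simp [j.isLt]
  rw [lhs, Fin.sum_univ_eq_sum_range (fun j =>
      if h' : j < M then mapp (A ^ j) (d ⟨j, h'⟩) else 0) M, key M' le_rfl]
  refine Finset.sum_subset (Finset.range_subset_range.2 h) fun j _ hj => ?_
  rw [Finset.mem_range] at hj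
  simp [hj]

end AuxStmt18

/-- If the expansions are not all distinct, or `𝒟_∞` is not uniformly discrete,
then the upper `s`-density of `μ` is infinite. -/
theorem stmt18 {n : ℕ} (hn : 0 < n) (A : Matrix (Fin n) (Fin n) ℝ)
    (hA : IsExpandingMatrix A)
    (hAnorm : ∀ x : Pt n, ‖x‖ ≤ ‖mapp A x‖)
    (hAeq : ∀ x : Pt n, ‖x‖ = ‖mapp A x‖ → x = 0)
    (w : Pt n → ℝ) (hw : IsPseudoNorm A w)
    (D : Finset (Pt n)) (hD0 : (0 : Pt n) ∈ D)
    (K : Set (Pt n)) (hK : IsSelfAffineSet A D K)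
    (s : ℝ) (hs : s = n * Real.log D.card / Real.log |A.det|)
    (μ : Measure (Pt n)) (hμ : ∀ W : Set (Pt n), μ W = ⨆ M : ℕ, muM A D M W)
    (h : (∃ M : ℕ, 1 ≤ M ∧ (DsetM A D M).ncard < D.card ^ M) ∨
      ¬ UniformlyDiscrete (DsetInf A D)) :
    upperDensity w s μ = ⊤ := by
  classical
  -- Step 1: near-coincidences of digit expansions at arbitrarily small scales
  have hKL : ∀ ε : ℝ, 0 < ε → ∃ (M : ℕ) (t t' : Fin M → Pt n),
      (∀ j, t j ∈ D) ∧ (∀ j, t' j ∈ D) ∧ t ≠ t' ∧ ‖Ssum A t - Ssum A t'‖ ≤ ε := by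
    intro ε hε
    rcases h with ⟨M, _, hMlt⟩ | hud
    · set F : (Fin M → {x : Pt n // x ∈ D}) → Pt n :=
        fun d => ∑ j : Fin M, mapp (A ^ (j : ℕ)) ((d j : Pt n)) with hF
      have hrange : DsetM A D M = Set.range F := by
        ext x
        constructor
        · rintro ⟨d, hd, rfl⟩
          exact ⟨fun j => ⟨d j, hd j⟩, rfl⟩
        · rintro ⟨d, rfl⟩
          exact ⟨fun j => (d j : Pt n), fun j => (d j).2, rfl⟩
      have hninj : ¬ Function.Injective F := by
        intro hinj
        have h1 : (DsetM A D M).ncard = D.card ^ M := by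
          rw [hrange, ← Nat.card_coe_set_eq, Nat.card_range_of_injective hinj,
            Nat.card_eq_fintype_card, Fintype.card_fun, Fintype.card_coe, Fintype.card_fin]
        omega
      rw [Function.not_injective_iff] at hninj
      obtain ⟨d, d', hdd, hne⟩ := hninj
      refine ⟨M, fun j => (d j : Pt n), fun j => (d' j : Pt n),
        fun j => (d j).2, fun j => (d' j).2, ?_, ?_⟩
      · intro hcontra
        exact hne (funext fun j => Subtype.ext (congrFun hcontra j))
      · have he : Ssum A (fun j => ((d j : Pt n))) = Ssum A (fun j => ((d' j : Pt n))) := hdd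
        rw [he]
        simp [hε.le]
    · rw [UniformlyDiscrete] at hud
      push_neg at hud
      obtain ⟨x, hx, y, hy, hxy, hclose⟩ := hud ε hε
      simp only [DsetInf, Set.mem_iUnion] at hx hy
      obtain ⟨M₁, _, hx⟩ := hx
      obtain ⟨M₂, _, hy⟩ := hy
      obtain ⟨t, ht, htx⟩ := DsetM_mono' A D hD0 (le_max_left M₁ M₂) hx
      obtain ⟨t', ht', hty⟩ := DsetM_mono' A D hD0 (le_max_right M₁ M₂) hy
      have hex : Ssum A t = x := htx.symm
      have hey : Ssum A t' = y := hty.symm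
      refine ⟨max M₁ M₂, t, t', ht, ht', ?_, ?_⟩
      · rintro rfl
        exact hxy (hex.symm.trans hey)
      · rw [hex, hey]
        exact hclose
  -- Step 2: 2^k distinct digit tuples whose sums lie in an ε-ball
  have hCL : ∀ (k : ℕ) (ε : ℝ), 0 < ε → ∃ (N : ℕ) (T : (Fin k → Bool) → Fin N → Pt n),
      (∀ c j, T c j ∈ D) ∧ Function.Injective T ∧
      ∃ z : Pt n, ∀ c, ‖Ssum A (T c) - z‖ ≤ ε := by
    intro k
    induction k with
    | zero =>
      intro ε hε
      refine ⟨0, fun _ => Fin.elim0, fun c j => j.elim0, ?_, 0, ?_⟩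
      · intro c c' _
        funext i
        exact i.elim0
      · intro c
        simp [Ssum, hε.le]
    | succ k IH =>
      intro ε hε
      obtain ⟨N, T, hTmem, hTinj, z, hTz⟩ := IH (ε / 2) (by positivity)
      set L : Pt n →L[ℝ] Pt n :=
        LinearMap.toContinuousLinearMap (Matrix.toEuclideanLin (A ^ N)) with hL
      have hLapp : ∀ x : Pt n, mapp (A ^ N) x = L x := fun x => rfl
      have hLnn : (0 : ℝ) ≤ ‖L‖ := norm_nonneg _
      obtain ⟨M, t, t', ht, ht', htne, hclose⟩ :=
        hKL (ε / (2 * (1 + ‖L‖))) (by positivity)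
      refine ⟨N + M, fun c => Fin.append (T (fun i => c i.castSucc))
        (if c (Fin.last k) then t else t'), ?_, ?_, z + mapp (A ^ N) (Ssum A t), ?_⟩
      · intro c j
        show Fin.append (T (fun i => c i.castSucc))
          (if c (Fin.last k) then t else t') j ∈ D
        refine Fin.addCases (fun i => ?_) (fun i => ?_) j
        · rw [Fin.append_left]
          exact hTmem _ i
        · rw [Fin.append_right]
          by_cases hb : c (Fin.last k)
          · rw [if_pos hb]; exact ht i
          · rw [if_neg hb]; exact ht' i
      · intro c c' hcc
        have hlast : c (Fin.last k) = c' (Fin.last k) := by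
          by_contra hne
          have hfun : (if c (Fin.last k) then t else t') =
              (if c' (Fin.last k) then t else t') := by
            funext j
            have h5 := congrFun hcc (Fin.natAdd N j)
            simpa only [Fin.append_right] using h5
          cases hb : c (Fin.last k) <;> cases hb' : c' (Fin.last k)
          · exact hne (hb.trans hb'.symm)
          · rw [hb, hb'] at hfun
            simp only [Bool.false_eq_true, if_false, if_true] at hfun
            exact htne hfun.symm
          · rw [hb, hb'] at hfun
            simp only [Bool.false_eq_true, if_false, if_true] at hfun
            exact htne hfun
          · exact hne (hb.trans hb'.symm)
        have hleft : (fun i => c i.castSucc) = (fun i : Fin k => c' i.castSucc) := by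
          apply hTinj
          funext j
          have h5 := congrFun hcc (Fin.castAdd M j)
          simpa only [Fin.append_left] using h5
        funext i
        refine Fin.lastCases ?_ (fun j => ?_) i
        · exact hlast
        · exact congrFun hleft j
      · intro c
        show ‖Ssum A (Fin.append (T (fun i => c i.castSucc))
          (if c (Fin.last k) then t else t')) - (z + mapp (A ^ N) (Ssum A t))‖ ≤ ε
        rw [Ssum_append]
        have hdecomp : Ssum A (T fun i => c i.castSucc) +
            mapp (A ^ N) (Ssum A (if c (Fin.last k) then t else t')) -
            (z + mapp (A ^ N) (Ssum A t)) =
            (Ssum A (T fun i => c i.castSucc) - z) +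
            L (Ssum A (if c (Fin.last k) then t else t') - Ssum A t) := by
          rw [map_sub, ← hLapp, ← hLapp]
          abel
        rw [hdecomp]
        refine (norm_add_le _ _).trans ?_
        have h1 := hTz (fun i => c i.castSucc)
        have h2 : ‖L (Ssum A (if c (Fin.last k) then t else t') - Ssum A t)‖ ≤ ε / 2 := by
          refine (L.le_opNorm _).trans ?_
          have hnorm : ‖Ssum A (if c (Fin.last k) then t else t') - Ssum A t‖ ≤
              ε / (2 * (1 + ‖L‖)) := by
            by_cases hb : c (Fin.last k)
            · rw [if_pos hb, sub_self, norm_zero]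
              positivity
            · rw [if_neg hb, norm_sub_rev]
              exact hclose
          have hq : (0 : ℝ) ≤ ε / (2 * (1 + ‖L‖)) := by positivity
          have h4 : ε / (2 * (1 + ‖L‖)) * (2 * (1 + ‖L‖)) = ε :=
            div_mul_cancel₀ _ (by positivity)
          nlinarith [mul_le_mul_of_nonneg_left hnorm hLnn]
        linarith
  -- Step 3: translated balls of fixed radius with mass ≥ 2^k
  have hball : ∀ (k : ℕ) (R : ℝ), 1 ≤ R →
      ∃ z : Pt n, (2 ^ k : ℝ≥0∞) ≤ μ (Metric.closedBall z R) := by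
    intro k R hR
    obtain ⟨N, T, hmem, hinj, z, hz⟩ := hCL k 1 one_pos
    refine ⟨z, ?_⟩
    rw [hμ]
    refine le_trans ?_ (le_iSup (fun M => muM A D M (Metric.closedBall z R)) N)
    set T' : (Fin k → Bool) → (Fin N → {x : Pt n // x ∈ D}) :=
      fun c j => ⟨T c j, hmem c j⟩ with hT'
    have hT'inj : Function.Injective T' := by
      intro c c' hcc
      apply hinj
      funext j
      exact congrArg Subtype.val (congrFun hcc j)
    have hsum : muM A D N (Metric.closedBall z R) =
        ∑ d : Fin N → {x : Pt n // x ∈ D},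
          Measure.dirac (∑ j : Fin N, mapp (A ^ (j : ℕ)) ((d j : Pt n)))
            (Metric.closedBall z R) := by
      rw [muM, Measure.finset_sum_apply]
    rw [hsum]
    calc (2 ^ k : ℝ≥0∞) = ∑ _c : Fin k → Bool, (1 : ℝ≥0∞) := by
          rw [Finset.sum_const, Finset.card_univ, Fintype.card_fun]
          simp
      _ ≤ ∑ c : Fin k → Bool,
            Measure.dirac (∑ j : Fin N, mapp (A ^ (j : ℕ)) ((T' c j : Pt n)))
              (Metric.closedBall z R) := by
          refine Finset.sum_le_sum fun c _ => ?_
          have hmemball : (∑ j : Fin N, mapp (A ^ (j : ℕ)) ((T' c j : Pt n))) ∈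
              Metric.closedBall z R := by
            have he : (∑ j : Fin N, mapp (A ^ (j : ℕ)) ((T' c j : Pt n))) =
                Ssum A (T c) := rfl
            rw [he, Metric.mem_closedBall, dist_eq_norm]
            exact (hz c).trans hR
          rw [Measure.dirac_apply_of_mem hmemball]
      _ = ∑ d ∈ Finset.image T' Finset.univ,
            Measure.dirac (∑ j : Fin N, mapp (A ^ (j : ℕ)) ((d j : Pt n)))
              (Metric.closedBall z R) := by
          rw [Finset.sum_image (fun a _ b _ hab => hT'inj hab)]
      _ ≤ ∑ d : Fin N → {x : Pt n // x ∈ D},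
            Measure.dirac (∑ j : Fin N, mapp (A ^ (j : ℕ)) ((d j : Pt n)))
              (Metric.closedBall z R) :=
          Finset.sum_le_sum_of_subset (Finset.subset_univ _)
  -- Step 4: conclude
  obtain ⟨C, hC, α₁, hα₁, α₂, hα₂, hcomp1, hcomp2⟩ := hw.comparable
  rw [upperDensity, iInf_eq_top]
  intro r
  rw [iInf_eq_top]
  intro hr
  have hcrpos : 0 < C * r := mul_pos hC hr
  set R : ℝ := 1 + max 0 ((C * r) ^ (1 / α₁)) with hRdef
  have hmax1 : (0 : ℝ) ≤ max 0 ((C * r) ^ (1 / α₁)) := le_max_left _ _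
  have hmax2 : (C * r) ^ (1 / α₁) ≤ max 0 ((C * r) ^ (1 / α₁)) := le_max_right _ _
  have hmax3 : 0 < (C * r) ^ (1 / α₁) := Real.rpow_pos_of_pos hcrpos _
  have hR1 : (1 : ℝ) ≤ R := by rw [hRdef]; linarith
  have hRlt : (1 : ℝ) < R := by rw [hRdef]; linarith
  set B₀ : Set (Pt n) := Metric.closedBall (0 : Pt n) R with hB₀
  set c : ℝ≥0∞ := pdiam w B₀ with hc
  have hc_lb : ENNReal.ofReal r ≤ c := by
    set v : Pt n := EuclideanSpace.single ⟨0, hn⟩ (R : ℝ) with hv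
    have hvnorm : ‖v‖ = R := by
      rw [hv, EuclideanSpace.norm_single, Real.norm_eq_abs, abs_of_nonneg (by linarith)]
    have hvmem : v ∈ B₀ := by
      rw [hB₀, Metric.mem_closedBall, dist_eq_norm, sub_zero, hvnorm]
    have h0mem : (0 : Pt n) ∈ B₀ := by
      rw [hB₀]
      exact Metric.mem_closedBall_self (by linarith)
    have hwv : r ≤ w v := by
      have hv1 : 1 < ‖v‖ := by rw [hvnorm]; exact hRlt
      have hcomp := (hcomp1 v hv1).1
      have hle : (C * r) ^ (1 / α₁) ≤ R := by rw [hRdef]; linarith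
      have hRpow : C * r ≤ ‖v‖ ^ α₁ := by
        rw [hvnorm]
        calc C * r = (C * r) ^ ((1 / α₁) * α₁) := by
              rw [one_div_mul_cancel hα₁.ne', Real.rpow_one]
          _ = ((C * r) ^ (1 / α₁)) ^ α₁ := Real.rpow_mul hcrpos.le _ _
          _ ≤ R ^ α₁ := Real.rpow_le_rpow (Real.rpow_nonneg hcrpos.le _) hle hα₁.le
      calc r = C⁻¹ * (C * r) := by field_simp
        _ ≤ C⁻¹ * ‖v‖ ^ α₁ := mul_le_mul_of_nonneg_left hRpow (inv_nonneg.2 hC.le)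
        _ ≤ w v := hcomp
    calc ENNReal.ofReal r ≤ ENNReal.ofReal (w (v - 0)) := by
          rw [sub_zero]
          exact ENNReal.ofReal_le_ofReal hwv
      _ ≤ c := le_pdiam' hvmem h0mem
  have hc0 : c ≠ 0 := ((ENNReal.ofReal_pos.2 hr).trans_le hc_lb).ne'
  have hc_top : c ≠ ⊤ := by
    obtain ⟨m0, hm0mem, hm0'⟩ := (isCompact_closedBall (0 : Pt n) (2 * R)).exists_isMaxOn
      ⟨0, Metric.mem_closedBall_self (by linarith)⟩ hw.continuous.continuousOn
    have hm0 : ∀ u ∈ Metric.closedBall (0 : Pt n) (2 * R), w u ≤ w m0 := fun u hu => hm0' hu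
    have hub : c ≤ ENNReal.ofReal (w m0) := by
      refine pdiam_le' fun x hx y hy => ?_
      rw [hB₀, Metric.mem_closedBall, dist_zero_right] at hx hy
      refine hm0 (x - y) ?_
      rw [Metric.mem_closedBall, dist_zero_right]
      calc ‖x - y‖ ≤ ‖x‖ + ‖y‖ := norm_sub_le _ _
        _ ≤ 2 * R := by linarith
    exact ne_top_of_le_ne_top ENNReal.ofReal_ne_top hub
  have hcs_top : c ^ s ≠ ⊤ := by
    rw [Ne, ENNReal.rpow_eq_top_iff]
    rintro (⟨h1, _⟩ | ⟨h1, _⟩)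
    exacts [hc0 h1, hc_top h1]
  have hsup : ∀ k : ℕ, (2 : ℝ≥0∞) ^ k / c ^ s ≤
      ⨆ (U : Set (Pt n)) (_ : IsCompact U) (_ : Convex ℝ U)
        (_ : ENNReal.ofReal r ≤ pdiam w U), μ U / pdiam w U ^ s := by
    intro k
    obtain ⟨z, hzball⟩ := hball k R hR1
    have hpd : pdiam w (Metric.closedBall z R) = c := pdiam_closedBall_eq' w z 0 R
    refine le_iSup_of_le (Metric.closedBall z R) ?_
    refine le_iSup_of_le (isCompact_closedBall z R) ?_
    refine le_iSup_of_le (convex_closedBall z R) ?_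
    refine le_iSup_of_le (by rw [hpd]; exact hc_lb) ?_
    rw [hpd]
    exact ENNReal.div_le_div_right hzball _
  have htwo : (⨆ k : ℕ, (2 : ℝ≥0∞) ^ k) = ⊤ := by
    rw [eq_top_iff, ← ENNReal.iSup_natCast]
    refine iSup_mono fun k => ?_
    calc (k : ℝ≥0∞) ≤ ((2 ^ k : ℕ) : ℝ≥0∞) := Nat.cast_le.2 (Nat.lt_two_pow_self (n := k)).le
      _ = 2 ^ k := by push_cast; ring
  rw [eq_top_iff]
  calc (⊤ : ℝ≥0∞) = (⨆ k : ℕ, (2 : ℝ≥0∞) ^ k) / c ^ s := by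
        rw [htwo, ENNReal.top_div_of_ne_top hcs_top]
    _ = ⨆ k : ℕ, (2 : ℝ≥0∞) ^ k / c ^ s := ENNReal.iSup_div _ _
    _ ≤ _ := iSup_le hsup
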